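/- Plotkin-type bound for batch/PIR codes: let G be a k×n matrix over a finite field F_q with property A_t. If q·t > (q−1)·n, then q^k ≤ ⌊ q·t / (q·t − (q−1)·n) ⌋. -/

import Mathlib

/-- Some `F`-linear combination of the columns of `G` indexed by `T` equals the vector `v`. -/
def ColLinComb {F : Type*} [Field F] {k n : ℕ} (G : Matrix (Fin k) (Fin n) F)
    (T : Finset (Fin n)) (v : Fin k → F) : Prop :=
  ∃ c : Fin n → F, ∑ j ∈ T, c j • G.transpose j = v

/-- `G` has property `A_t` (generates a `t`-server PIR code). -/
def PropertyA {F : Type*} [Field F] {k n : ℕ} (G : Matrix (Fin k) (Fin n) F) (t : ℕ) : Prop :=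
  ∀ i : Fin k, ∃ T : Fin t → Finset (Fin n),
    (∀ j₁ j₂ : Fin t, j₁ ≠ j₂ → Disjoint (T j₁) (T j₂)) ∧
    ∀ j : Fin t, ColLinComb G (T j) (Pi.single i 1)

open Finset
open scoped Classical

lemma weight_bound {F : Type*} [Field F] {k n t : ℕ} (G : Matrix (Fin k) (Fin n) F)
    (hA : PropertyA G t) (z : Fin k → F) (hz : z ≠ 0) :
    t ≤ (univ.filter fun m => Matrix.vecMul z G m ≠ 0).card := by
  obtain ⟨i, hi⟩ := Function.ne_iff.mp hz
  rw [Pi.zero_apply] at hi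
  obtain ⟨T, hdisj, hcomb⟩ := hA i
  have h : ∀ j : Fin t, ∃ m, m ∈ T j ∧ Matrix.vecMul z G m ≠ 0 := by
    intro j
    obtain ⟨c, hc⟩ := hcomb j
    have hdot : ∑ m ∈ T j, c m * Matrix.vecMul z G m = z i := by
      calc ∑ m ∈ T j, c m * Matrix.vecMul z G m
          = ∑ m ∈ T j, ∑ l, z l * (c m * G l m) := by
            refine Finset.sum_congr rfl fun m _ => ?_
            simp only [Matrix.vecMul, dotProduct, Finset.mul_sum]
            refine Finset.sum_congr rfl fun l _ => ?_
            ring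
        _ = ∑ l, ∑ m ∈ T j, z l * (c m * G l m) := Finset.sum_comm
        _ = ∑ l, z l * (∑ m ∈ T j, c m • G.transpose m) l := by
            refine Finset.sum_congr rfl fun l _ => ?_
            simp [Finset.mul_sum]
        _ = ∑ l, z l * (Pi.single i 1 : Fin k → F) l := by rw [hc]
        _ = z i := by simp [Pi.single_apply]
    by_contra hcon
    push_neg at hcon
    apply hi
    rw [← hdot]
    apply Finset.sum_eq_zero
    intro m hm
    rcases eq_or_ne (Matrix.vecMul z G m) 0 with h0 | h0
    · rw [h0, mul_zero]
    · exact absurd h0 (not_not.mpr (hcon m hm))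
  choose f hfT hf using h
  calc t = (univ : Finset (Fin t)).card := by simp
    _ ≤ (univ.filter fun m => Matrix.vecMul z G m ≠ 0).card := by
        apply Finset.card_le_card_of_injOn f
        · intro j _
          simp only [mem_coe, mem_filter, mem_univ, true_and]
          exact hf j
        · intro j₁ _ j₂ _ hEq
          by_contra hne
          exact Finset.disjoint_left.mp (hdisj j₁ j₂ hne) (hfT j₁) (hEq ▸ hfT j₂)

lemma fiber_count {F : Type*} [Field F] [Fintype F] {k : ℕ} (f : (Fin k → F) →ₗ[F] F) :
    Fintype.card F * (univ.filter fun z => f z ≠ 0).card ≤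
      (Fintype.card F - 1) * Fintype.card F ^ k := by
  set q := Fintype.card F
  have hM : Fintype.card (Fin k → F) = q ^ k := by
    simp [Fintype.card_fun, q]
  have hsplit : (univ.filter fun z => f z = 0).card
      + (univ.filter fun z => f z ≠ 0).card = q ^ k := by
    rw [Finset.card_filter_add_card_filter_not, Finset.card_univ, hM]
  have hker : Fintype.card (LinearMap.ker f) = (univ.filter fun z => f z = 0).card := by
    rw [← Fintype.card_subtype]
    apply Fintype.card_congr
    exact Equiv.subtypeEquivRight (fun z => LinearMap.mem_ker)
  have hquot : Nat.card ((Fin k → F) ⧸ LinearMap.ker f) ≤ q := by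
    have e := f.quotKerEquivRange
    calc Nat.card ((Fin k → F) ⧸ LinearMap.ker f) = Nat.card (LinearMap.range f) :=
          Nat.card_congr e.toEquiv
      _ ≤ Nat.card F := Nat.card_le_card_of_injective _ Subtype.val_injective
      _ = q := Nat.card_eq_fintype_card
  have hlag := AddSubgroup.card_eq_card_quotient_mul_card_addSubgroup
      (LinearMap.ker f).toAddSubgroup
  have hc1 : Nat.card ((LinearMap.ker f).toAddSubgroup) = Fintype.card (LinearMap.ker f) :=
    Nat.card_eq_fintype_card
  have hc2 : Nat.card ((Fin k → F) ⧸ (LinearMap.ker f).toAddSubgroup)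
      = Nat.card ((Fin k → F) ⧸ LinearMap.ker f) := rfl
  have hkey : q ^ k ≤ q * Fintype.card (LinearMap.ker f) := by
    rw [Nat.card_eq_fintype_card, hM, hc1, hc2] at hlag
    rw [hlag]
    exact Nat.mul_le_mul_right _ hquot
  have hq1 : 1 ≤ q := Fintype.card_pos
  rw [hker] at hkey
  set a := (univ.filter fun z => f z = 0).card
  set b := (univ.filter fun z => f z ≠ 0).card
  have h1 : q * b + q ^ k ≤ q * q ^ k := by
    calc q * b + q ^ k ≤ q * b + q * a := by omega
      _ = q * (a + b) := by ring
      _ = q * q ^ k := by rw [hsplit]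
  have h2 : (q - 1) * q ^ k = q * q ^ k - q ^ k := Nat.sub_one_mul q (q ^ k)
  omega


/-- **Plotkin-type bound for batch/PIR codes.**  If a `k×n` matrix `G` over `F_q` has
property `A_t` and `q·t > (q−1)·n`, then `q^k ≤ ⌊q·t / (q·t − (q−1)·n)⌋`. -/
theorem plotkin_bound_PIR {F : Type*} [Field F] [Fintype F] {k n t : ℕ}
    (G : Matrix (Fin k) (Fin n) F) (hA : PropertyA G t)
    (hq : Fintype.card F * t > (Fintype.card F - 1) * n) :
    Fintype.card F ^ k ≤
      Fintype.card F * t / (Fintype.card F * t - (Fintype.card F - 1) * n) := by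

  set q := Fintype.card F with hqdef
  set M := q ^ k with hMdef
  set S := ∑ z : Fin k → F, (univ.filter fun m => Matrix.vecMul z G m ≠ 0).card with hS
  -- lower bound
  have hlow : (M - 1) * t ≤ S := by
    have hMcard : Fintype.card (Fin k → F) = M := by simp [hMdef, Fintype.card_fun, hqdef]
    calc (M - 1) * t = ((univ : Finset (Fin k → F)).erase 0).card * t := by
          rw [Finset.card_erase_of_mem (mem_univ 0), Finset.card_univ, hMcard]
      _ = ((univ : Finset (Fin k → F)).erase 0).card • t := rfl
      _ ≤ ∑ z ∈ (univ : Finset (Fin k → F)).erase 0,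
            (univ.filter fun m => Matrix.vecMul z G m ≠ 0).card := by
          apply Finset.card_nsmul_le_sum
          intro z hz
          exact weight_bound G hA z (Finset.ne_of_mem_erase hz)
      _ ≤ S := Finset.sum_le_sum_of_subset (Finset.erase_subset _ _)
  -- column swap
  have hswap : S = ∑ m : Fin n, (univ.filter fun z : Fin k → F => Matrix.vecMul z G m ≠ 0).card := by
    simp only [hS, Finset.card_filter]
    exact Finset.sum_comm
  -- upper bound
  have hup : q * S ≤ n * ((q - 1) * M) := by
    rw [hswap, Finset.mul_sum]
    calc ∑ m : Fin n, q * (univ.filter fun z : Fin k → F => Matrix.vecMul z G m ≠ 0).card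
        ≤ ∑ _m : Fin n, (q - 1) * M := by
          apply Finset.sum_le_sum
          intro m _
          have := fiber_count ((LinearMap.proj m).comp (Matrix.vecMulLinear G))
          convert this using 2
          · rfl
          · congr 1
      _ = n * ((q - 1) * M) := by simp [Finset.sum_const, mul_comm]
  -- combine
  have hM1 : 1 ≤ M := Nat.one_le_pow _ _ Fintype.card_pos
  set A := q * t with hA'
  set B := (q - 1) * n with hB'
  have hmain : A * (M - 1) ≤ B * M := by
    calc A * (M - 1) = q * ((M - 1) * t) := by ring
      _ ≤ q * S := Nat.mul_le_mul_left _ hlow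
      _ ≤ n * ((q - 1) * M) := hup
      _ = B * M := by ring
  have hpos : 0 < A - B := by omega
  rw [Nat.le_div_iff_mul_le hpos]
  have e1 : M * (A - B) + M * B = M * A := by
    rw [← Nat.mul_add, Nat.sub_add_cancel (le_of_lt hq)]
  have e2 : A * M = A * (M - 1) + A := by
    conv_lhs => rw [← Nat.sub_add_cancel hM1]
    ring
  have e3 : M * A = A * M := Nat.mul_comm _ _
  have e4 : M * B = B * M := Nat.mul_comm _ _
  omega
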